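/- For a simple graph G on n vertices with at least one edge, mc^{nh}_n(G) ≥ 2 if and only if the complement graph G^c contains a Hamiltonian path. -/

import Mathlib

open SimpleGraph

/-- `w_ψ`-style: `mcA k G` is the max over labelings `ψ : V → {1,…,k}` of the
minimum of `|ψ u − ψ v|` over edges, phrased via `sSup`. -/
noncomputable def mcA {V : Type*} (k : ℕ) (G : SimpleGraph V) : ℕ :=
  sSup {m | ∃ ψ : V → ℕ, (∀ v, ψ v ∈ Finset.Icc 1 k) ∧
    ∀ u v, G.Adj u v → m ≤ Nat.dist (ψ u) (ψ v)}

/-- No-hole anti-n-labeling number: `ψ` is a bijection from `V` onto `{1,…,n}`,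
`n = |V|`. -/
noncomputable def mcNH {V : Type*} [Fintype V] (G : SimpleGraph V) : ℕ :=
  sSup {m | ∃ ψ : V → ℕ, Set.BijOn ψ Set.univ (Set.Icc 1 (Fintype.card V)) ∧
    ∀ u v, G.Adj u v → m ≤ Nat.dist (ψ u) (ψ v)}

lemma walk_of_chain {V : Type*} (H : SimpleGraph V) :
    ∀ (l : List V) (a : V), List.Chain H.Adj a l →
    ∃ (b : V) (p : H.Walk a b), p.support = a :: l := by
  intro l
  induction l with
  | nil => exact fun a _ => ⟨a, SimpleGraph.Walk.nil, rfl⟩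
  | cons c t ih =>
    intro a h
    replace h : H.Adj a c ∧ List.Chain H.Adj c t := List.isChain_cons_cons.mp h
    obtain ⟨b, p, hp⟩ := ih c h.2
    exact ⟨b, SimpleGraph.Walk.cons h.1 p, by simp [hp]⟩

lemma walk_of_chain' {V : Type*} (H : SimpleGraph V) (l : List V) (hl : l ≠ [])
    (hc : l.Chain' H.Adj) : ∃ a b, ∃ p : H.Walk a b, p.support = l := by
  match l with
  | a :: t =>
    obtain ⟨b, p, hp⟩ := walk_of_chain H t a hc
    exact ⟨a, b, p, hp⟩

theorem stmt_10 {V : Type*} [Fintype V] [DecidableEq V] (G : SimpleGraph V)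
    (hE : G.edgeSet.Nonempty) :
    2 ≤ mcNH G ↔ ∃ (u v : V) (p : Gᶜ.Walk u v), p.IsHamiltonian := by
  classical
  set n := Fintype.card V with hn
  set S := {m | ∃ ψ : V → ℕ, Set.BijOn ψ Set.univ (Set.Icc 1 (Fintype.card V)) ∧
    ∀ u v, G.Adj u v → m ≤ Nat.dist (ψ u) (ψ v)} with hS
  have hab : ∃ a b, G.Adj a b := by
    obtain ⟨e, he⟩ := hE
    induction e using Sym2.ind with
    | _ a b => exact ⟨a, b, G.mem_edgeSet.mp he⟩
  obtain ⟨a₀, b₀, hab₀⟩ := hab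
  have hbdd : BddAbove S := by
    refine ⟨n, fun m hm => ?_⟩
    obtain ⟨ψ, hbij, hd⟩ := hm
    have h1 := hbij.mapsTo (Set.mem_univ a₀)
    have h2 := hbij.mapsTo (Set.mem_univ b₀)
    have := hd a₀ b₀ hab₀
    simp only [Set.mem_Icc] at h1 h2
    simp only [Nat.dist] at this
    omega
  have hne : Nonempty V := ⟨a₀⟩
  have hn1 : 1 ≤ n := Fintype.card_pos
  constructor
  · intro h2
    have hSn : S.Nonempty := by
      by_contra hc
      rw [Set.not_nonempty_iff_eq_empty] at hc
      rw [mcNH, ← hS, hc] at h2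
      simp at h2
    rw [mcNH, ← hS] at h2
    have hmem : sSup S ∈ S := Nat.sSup_mem hSn hbdd
    obtain ⟨ψ, hbij, hd⟩ := hmem
    have hψinj : Function.Injective ψ := fun x y hxy =>
      hbij.injOn (Set.mem_univ x) (Set.mem_univ y) hxy
    have hsurj : ∀ i : Fin n, ∃ v, ψ v = i.1 + 1 := by
      intro i
      obtain ⟨v, -, hv⟩ := hbij.surjOn (by
        simp only [Set.mem_Icc]; omega : (i.1 + 1 : ℕ) ∈ Set.Icc 1 (Fintype.card V))
      exact ⟨v, hv⟩
    choose f hf using hsurj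
    have hfinj : Function.Injective f := by
      intro i j hij
      have : (i.1 : ℕ) + 1 = j.1 + 1 := by rw [← hf i, ← hf j, hij]
      exact Fin.ext (by omega)
    set l : List V := List.ofFn f with hl
    have hlen : l.length = n := by simp [hl]
    have hnodup : l.Nodup := List.nodup_ofFn.mpr hfinj
    have hmeml : ∀ v : V, v ∈ l := by
      intro v
      have hv := hbij.mapsTo (Set.mem_univ v)
      simp only [Set.mem_Icc] at hv
      have hlt : ψ v - 1 < n := by omega
      have : ψ (f ⟨ψ v - 1, hlt⟩) = ψ v := by
        rw [hf]; show ψ v - 1 + 1 = ψ v; omega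
      have := hψinj this
      rw [hl, List.mem_ofFn]
      exact ⟨_, this⟩
    have hchain : l.Chain' Gᶜ.Adj := by
      have key : ∀ (x y : Fin n), (x : ℕ) + 1 = y → Gᶜ.Adj (f x) (f y) := by
        intro x y hxy
        rw [SimpleGraph.compl_adj]
        constructor
        · intro hfe
          have : (x : ℕ) + 1 = (y : ℕ) + 1 := by rw [← hf x, ← hf y, hfe]
          omega
        · intro hadj
          have := hd _ _ hadj
          rw [hf x, hf y] at this
          simp only [Nat.dist] at this
          omega
      rw [hl]; refine List.isChain_iff_getElem.mpr ?_
      intro i hi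
      simp only [List.getElem_ofFn]
      apply key
      rfl
    have hlne : l ≠ [] := by
      intro h; rw [h] at hlen; simp at hlen; omega
    obtain ⟨u, v, p, hp⟩ := walk_of_chain' Gᶜ l hlne hchain
    refine ⟨u, v, p, ?_⟩
    intro w
    rw [hp]
    exact List.count_eq_one_of_mem hnodup (hmeml w)
  · rintro ⟨u, v, p, hp⟩
    set l := p.support with hl
    have hnodup : l.Nodup := hp.isPath.support_nodup
    have hlen : l.length = n := by
      rw [hl, SimpleGraph.Walk.length_support, hp.length_eq]
      omega
    have hmeml : ∀ w : V, w ∈ l := fun w => hp.mem_support w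
    set ψ : V → ℕ := fun w => l.idxOf w + 1 with hψ
    have hidx : ∀ w : V, l.idxOf w < n := fun w =>
      hlen ▸ List.idxOf_lt_length_iff.mpr (hmeml w)
    have h2S : (2 : ℕ) ∈ S := by
      refine ⟨ψ, ⟨?_, ?_, ?_⟩, ?_⟩
      · intro w _
        simp only [hψ, Set.mem_Icc]
        exact ⟨by omega, hidx w⟩
      · intro w _ w' _ hww'
        simp only [hψ, add_left_inj] at hww'
        exact (List.idxOf_inj (hmeml w)).mp hww'
      · intro i hi
        simp only [Set.mem_Icc] at hi
        have hilt : i - 1 < l.length := by omega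
        refine ⟨l.get ⟨i - 1, hilt⟩, Set.mem_univ _, ?_⟩
        simp only [hψ]
        rw [List.get_idxOf hnodup]
        show i - 1 + 1 = i
        omega
      · intro x y hxy
        have hxy' : x ≠ y := G.ne_of_adj hxy
        have hne' : l.idxOf x ≠ l.idxOf y := fun h =>
          hxy' ((List.idxOf_inj (hmeml x)).mp h)
        by_contra hlt
        push_neg at hlt
        have hchain := List.isChain_iff_getElem.mp p.isChain_adj_support
        simp only [hψ, Nat.dist] at hlt
        have hd1 : l.idxOf x + 1 = l.idxOf y ∨ l.idxOf y + 1 = l.idxOf x := by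
          omega
        have hgen : ∀ (i j : ℕ) (hi : i < l.length) (hj : j < l.length), j = i + 1 →
            Gᶜ.Adj (l.get ⟨i, hi⟩) (l.get ⟨j, hj⟩) := by
          intro i j hi hj hij
          subst hij
          exact hchain i (by simp only [hl] at hj; omega)
        rcases hd1 with h | h
        · have hadj := hgen (List.idxOf x l) (List.idxOf y l)
            (hlen ▸ hidx x) (hlen ▸ hidx y) h.symm
          rw [List.idxOf_get, List.idxOf_get] at hadj
          exact ((SimpleGraph.compl_adj G _ _).mp hadj).2 hxy
        · have hadj := hgen (List.idxOf y l) (List.idxOf x l)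
            (hlen ▸ hidx y) (hlen ▸ hidx x) h.symm
          rw [List.idxOf_get, List.idxOf_get] at hadj
          exact ((SimpleGraph.compl_adj G _ _).mp hadj).2 hxy.symm
    exact le_csSup hbdd h2S
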